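/- Fix λ ∈ k. Define the one-step rewriting relation →_Π on V = 𝔖(Z) →₀ k (the rewriting system of the differential operator identity of weight λ, ⌊xy⌋ = ⌊x⌋y + x⌊y⌋ + λ⌊x⌋⌊y⌋): f →_Π g iff there exist a context q and nonempty bracketed words u, v such that the word t := q[⌊u ++ v⌋] lies in supp(f) and g = f − f(t)·δ_t + f(t)·( δ_{q[⌊u⌋ ++ v]} + δ_{q[u ++ ⌊v⌋]} + λ·δ_{q[⌊u⌋ ++ ⌊v⌋]} ). Then →_Π is convergent (terminating and confluent). -/

import Mathlib

/-- Bracketed letters on `Z`: either a generator, or the letter `⌊w⌋` obtained by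
applying the formal operator `⌊ ⌋` to a nonempty word `w = h :: t`. -/
inductive BLtr (Z : Type*) where
  | of : Z → BLtr Z
  | flr : BLtr Z → List (BLtr Z) → BLtr Z

/-- Bracketed words on `Z`: nonempty lists of bracketed letters. -/
def BWord (Z : Type*) := {l : List (BLtr Z) // l ≠ []}

/-- Concatenation of bracketed words. -/
def BWord.cat {Z : Type*} (u v : BWord Z) : BWord Z :=
  ⟨u.1 ++ v.1, by
    intro h
    rcases List.append_eq_nil_iff.mp h with ⟨h1, _⟩
    exact u.2 h1⟩

/-- `⌊w⌋`: the one-letter word obtained by applying the formal operator to `w`. -/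
def BWord.flr {Z : Type*} (w : BWord Z) : BWord Z :=
  ⟨[BLtr.flr (w.1.head w.2) w.1.tail], by simp⟩

/-- Contexts (`⋆`-words) on `Z`. -/
inductive Ctx (Z : Type*) where
  | base : List (BLtr Z) → List (BLtr Z) → Ctx Z
  | deep : List (BLtr Z) → List (BLtr Z) → Ctx Z → Ctx Z

/-- Substitution of a bracketed word into a context. -/
def Ctx.subst {Z : Type*} : Ctx Z → BWord Z → BWord Z
  | .base l r, u => ⟨l ++ u.1 ++ r, by
      intro h
      rcases List.append_eq_nil_iff.mp h with ⟨h1, _⟩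
      rcases List.append_eq_nil_iff.mp h1 with ⟨_, h2⟩
      exact u.2 h2⟩
  | .deep l r q, u => ⟨l ++ (BWord.flr (q.subst u)).1 ++ r, by
      intro h
      rcases List.append_eq_nil_iff.mp h with ⟨h1, _⟩
      rcases List.append_eq_nil_iff.mp h1 with ⟨_, h2⟩
      exact (BWord.flr (q.subst u)).2 h2⟩

/-- Termination of a binary relation: no infinite chain of one-step rewritings. -/
def RelTerminating {V : Type*} (r : V → V → Prop) : Prop :=
  ¬ ∃ f : ℕ → V, ∀ n, r (f n) (f (n + 1))

/-- Confluence of a binary relation. -/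
def RelConfluent {V : Type*} (r : V → V → Prop) : Prop :=
  ∀ f g₁ g₂ : V, Relation.ReflTransGen r f g₁ → Relation.ReflTransGen r f g₂ →
    ∃ h, Relation.ReflTransGen r g₁ h ∧ Relation.ReflTransGen r g₂ h

/-- One-step rewriting relation of the differential identity of weight `λ`:
`⌊xy⌋ = ⌊x⌋y + x⌊y⌋ + λ⌊x⌋⌊y⌋`. -/
def DiffStep {Z k : Type*} [Field k] (lam : k) (f g : BWord Z →₀ k) : Prop :=
  ∃ (q : Ctx Z) (u v : BWord Z),
    f (q.subst (BWord.flr (u.cat v))) ≠ 0 ∧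
    g = f - Finsupp.single (q.subst (BWord.flr (u.cat v)))
              (f (q.subst (BWord.flr (u.cat v))))
        + f (q.subst (BWord.flr (u.cat v))) •
          (Finsupp.single (q.subst ((u.flr).cat v)) (1 : k)
            + Finsupp.single (q.subst (u.cat v.flr)) (1 : k)
            + lam • Finsupp.single (q.subst ((u.flr).cat v.flr)) (1 : k))

namespace DiffRw
variable {Z : Type*} {k : Type*} [Field k]

lemma bword_ext {u v : BWord Z} (h : u.1 = v.1) : u = v := Subtype.ext h

/-- the word `h :: t` -/
def wd (h : BLtr Z) (t : List (BLtr Z)) : BWord Z := ⟨h :: t, by simp⟩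

lemma wd_cat (a : BLtr Z) (t : List (BLtr Z)) (b : BLtr Z) (t' : List (BLtr Z)) :
    (wd a t).cat (wd b t') = wd a (t ++ b :: t') := bword_ext (by simp [BWord.cat, wd])

lemma bword_eq_wd (w : BWord Z) : w = wd (w.1.head w.2) w.1.tail :=
  bword_ext (List.cons_head_tail w.2).symm

lemma flr_wd (h : BLtr Z) (t : List (BLtr Z)) : (wd h t).flr = wd (BLtr.flr h t) [] := rfl

lemma cat_assoc (u v w : BWord Z) : (u.cat v).cat w = u.cat (v.cat w) :=
  bword_ext (by simp [BWord.cat, List.append_assoc])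

/-- convolution product on `BWord Z →₀ k` -/
noncomputable def mulA (f g : BWord Z →₀ k) : BWord Z →₀ k :=
  f.sum fun u a => g.sum fun v b => Finsupp.single (u.cat v) (a * b)

lemma mulA_single_left (u : BWord Z) (a : k) (g : BWord Z →₀ k) :
    mulA (Finsupp.single u a) g = g.sum fun v b => Finsupp.single (u.cat v) (a * b) := by
  rw [mulA]
  exact Finsupp.sum_single_index (by simp)

lemma mulA_single_single (u v : BWord Z) (a b : k) :
    mulA (Finsupp.single u a) (Finsupp.single v b) = Finsupp.single (u.cat v) (a * b) := by
  rw [mulA_single_left]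
  exact Finsupp.sum_single_index (by simp)

@[simp] lemma mulA_zero_left (g : BWord Z →₀ k) : mulA 0 g = 0 := Finsupp.sum_zero_index

@[simp] lemma mulA_zero_right (f : BWord Z →₀ k) : mulA f 0 = 0 := by
  rw [mulA]
  simp [Finsupp.sum_zero_index]

lemma mulA_add_left (f f' g : BWord Z →₀ k) :
    mulA (f + f') g = mulA f g + mulA f' g := by
  rw [mulA, mulA, mulA]
  refine Finsupp.sum_add_index' (by simp) ?_
  intro u a a'
  rw [← Finsupp.sum_add]
  refine Finsupp.sum_congr fun v _ => ?_
  rw [add_mul, Finsupp.single_add]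

lemma mulA_add_right (f g g' : BWord Z →₀ k) :
    mulA f (g + g') = mulA f g + mulA f g' := by
  rw [mulA, mulA, mulA, ← Finsupp.sum_add]
  refine Finsupp.sum_congr ?_
  intro u _
  refine Finsupp.sum_add_index' (by simp) ?_
  intro v b b'
  rw [mul_add, Finsupp.single_add]

lemma mulA_smul_left (c : k) (f g : BWord Z →₀ k) :
    mulA (c • f) g = c • mulA f g := by
  rw [mulA, mulA, Finsupp.smul_sum]
  rw [Finsupp.sum_smul_index (by simp)]
  refine Finsupp.sum_congr ?_
  intro u _
  rw [Finsupp.smul_sum]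
  refine Finsupp.sum_congr ?_
  intro v _
  rw [mul_assoc, Finsupp.smul_single, smul_eq_mul]

lemma mulA_smul_right (c : k) (f g : BWord Z →₀ k) :
    mulA f (c • g) = c • mulA f g := by
  rw [mulA, mulA, Finsupp.smul_sum]
  refine Finsupp.sum_congr ?_
  intro u _
  rw [Finsupp.sum_smul_index (by simp), Finsupp.smul_sum]
  refine Finsupp.sum_congr ?_
  intro v _
  rw [mul_left_comm, Finsupp.smul_single, smul_eq_mul]

lemma mulA_assoc (f g h : BWord Z →₀ k) :
    mulA (mulA f g) h = mulA f (mulA g h) := by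
  induction f using Finsupp.induction_linear with
  | zero => simp
  | add f f' hf hf' => rw [mulA_add_left, mulA_add_left, mulA_add_left, hf, hf']
  | single u a =>
    induction g using Finsupp.induction_linear with
    | zero => simp
    | add g g' hg hg' =>
      rw [mulA_add_right, mulA_add_left, mulA_add_left, mulA_add_right, hg, hg']
    | single v b =>
      induction h using Finsupp.induction_linear with
      | zero => simp
      | add h h' hh hh' =>
        rw [mulA_add_right, mulA_add_right, mulA_add_right, hh, hh']
      | single w c =>
        rw [mulA_single_single, mulA_single_single, mulA_single_single,
          mulA_single_single, cat_assoc, mul_assoc]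

/-- basis element -/
noncomputable def sA (h : BLtr Z) (t : List (BLtr Z)) : BWord Z →₀ k := Finsupp.single (wd h t) 1

lemma sA_mul (a : BLtr Z) (t : List (BLtr Z)) (b : BLtr Z) (t' : List (BLtr Z)) :
    mulA (sA a t) (sA b t') = (sA a (t ++ b :: t') : BWord Z →₀ k) := by
  rw [sA, sA, sA, mulA_single_single, wd_cat, one_mul]

lemma sA_cons (x a : BLtr Z) (t : List (BLtr Z)) :
    (sA x (a :: t) : BWord Z →₀ k) = mulA (sA x []) (sA a t) := by
  rw [sA_mul, List.nil_append]

/-- expansion of `⌊h :: t⌋` -/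
noncomputable def d (lam : k) : BLtr Z → List (BLtr Z) → (BWord Z →₀ k)
  | h, [] => sA (BLtr.flr h []) []
  | h, b :: t => mulA (sA (BLtr.flr h []) []) (sA b t) + mulA (sA h []) (d lam b t)
      + lam • mulA (sA (BLtr.flr h []) []) (d lam b t)

lemma d_append (lam : k) : ∀ (t : List (BLtr Z)) (h b : BLtr Z) (t' : List (BLtr Z)),
    d lam h (t ++ b :: t') =
      mulA (d lam h t) (sA b t') + mulA (sA h t) (d lam b t')
        + lam • mulA (d lam h t) (d lam b t')
  | [], h, b, t' => by rw [List.nil_append, d, d]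
  | a :: t, h, b, t' => by
    rw [List.cons_append, d, d, d_append lam t a b t']
    simp only [List.cons_append, sA_cons, mulA_add_left, mulA_add_right, mulA_smul_left,
      mulA_smul_right, smul_add, smul_smul, mulA_assoc]
    rw [sA_mul a t b t']
    abel

noncomputable def dW (lam : k) (w : BWord Z) : BWord Z →₀ k := d lam (w.1.head w.2) w.1.tail

lemma dW_wd (lam : k) (h : BLtr Z) (t : List (BLtr Z)) : dW lam (wd h t) = d lam h t := rfl

noncomputable def D (lam : k) (f : BWord Z →₀ k) : BWord Z →₀ k :=
  f.sum fun w c => c • dW lam w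

lemma D_single (lam : k) (w : BWord Z) (c : k) :
    D lam (Finsupp.single w c) = c • dW lam w := by
  rw [D]; exact Finsupp.sum_single_index (by simp)

@[simp] lemma D_zero (lam : k) : D lam (0 : BWord Z →₀ k) = 0 := Finsupp.sum_zero_index

lemma D_add (lam : k) (f g : BWord Z →₀ k) : D lam (f + g) = D lam f + D lam g := by
  rw [D, D, D]
  exact Finsupp.sum_add_index' (by simp) (by intro w c c'; rw [add_smul])

lemma D_smul (lam c : k) (f : BWord Z →₀ k) : D lam (c • f) = c • D lam f := by
  rw [D, D, Finsupp.smul_sum, Finsupp.sum_smul_index (by simp)]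
  exact Finsupp.sum_congr fun w _ => by rw [smul_smul]

lemma single_eq_smul_sA (h : BLtr Z) (t : List (BLtr Z)) (c : k) :
    (Finsupp.single (wd h t) c : BWord Z →₀ k) = c • sA h t := by
  rw [sA, Finsupp.smul_single, smul_eq_mul, mul_one]

lemma D_mul_single_single (lam : k) (hu : BLtr Z) (tu : List (BLtr Z)) (hv : BLtr Z)
    (tv : List (BLtr Z)) (a b : k) :
    D lam (mulA (Finsupp.single (wd hu tu) a) (Finsupp.single (wd hv tv) b))
      = mulA (D lam (Finsupp.single (wd hu tu) a)) (Finsupp.single (wd hv tv) b)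
        + mulA (Finsupp.single (wd hu tu) a) (D lam (Finsupp.single (wd hv tv) b))
        + lam • mulA (D lam (Finsupp.single (wd hu tu) a))
            (D lam (Finsupp.single (wd hv tv) b)) := by
  rw [mulA_single_single, wd_cat, D_single, D_single, D_single, dW_wd, dW_wd, dW_wd,
    d_append, single_eq_smul_sA, single_eq_smul_sA]
  simp only [smul_add, smul_smul, mulA_smul_left, mulA_smul_right]
  module

lemma D_mul (lam : k) (x y : BWord Z →₀ k) :
    D lam (mulA x y) = mulA (D lam x) y + mulA x (D lam y)
      + lam • mulA (D lam x) (D lam y) := by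
  induction x using Finsupp.induction_linear with
  | zero => simp
  | add f g hf hg =>
    simp only [mulA_add_left, D_add, hf, hg, mulA_add_right, smul_add]
    abel
  | single u a =>
    induction y using Finsupp.induction_linear with
    | zero => simp
    | add f g hf hg =>
      simp only [mulA_add_right, D_add, hf, hg, mulA_add_left, smul_add]
      abel
    | single v b =>
      rw [bword_eq_wd u, bword_eq_wd v, D_mul_single_single]

/-- full normalization of the word `h :: t` -/
noncomputable def nfW (lam : k) : BLtr Z → List (BLtr Z) → (BWord Z →₀ k)
  | .of z, [] => Finsupp.single (wd (.of z) []) 1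
  | .flr h t, [] => D lam (nfW lam h t)
  | .of z, b :: t => mulA (Finsupp.single (wd (.of z) []) 1) (nfW lam b t)
  | .flr h t', b :: t => mulA (D lam (nfW lam h t')) (nfW lam b t)
termination_by a t => sizeOf a + sizeOf t
decreasing_by all_goals simp +arith [*]

lemma nfW_of (lam : k) (z : Z) : nfW lam (.of z) [] = Finsupp.single (wd (.of z) []) 1 := by
  rw [nfW]

lemma nfW_flr (lam : k) (h : BLtr Z) (t : List (BLtr Z)) :
    nfW lam (.flr h t) [] = D lam (nfW lam h t) := by rw [nfW]

lemma nfW_cons (lam : k) (a b : BLtr Z) (t : List (BLtr Z)) :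
    nfW lam a (b :: t) = mulA (nfW lam a []) (nfW lam b t) := by
  cases a with
  | of z => simp only [nfW]
  | flr h t' => simp only [nfW]

lemma nfW_append (lam : k) : ∀ (t : List (BLtr Z)) (a b : BLtr Z) (t' : List (BLtr Z)),
    nfW lam a (t ++ b :: t') = mulA (nfW lam a t) (nfW lam b t')
  | [], a, b, t' => by rw [List.nil_append, nfW_cons]
  | c :: t, a, b, t' => by
    rw [List.cons_append, nfW_cons, nfW_cons, nfW_append lam t c b t', mulA_assoc]

/-- normalization of a word -/
noncomputable def nfB (lam : k) (w : BWord Z) : BWord Z →₀ k := nfW lam (w.1.head w.2) w.1.tail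

lemma nfB_wd (lam : k) (h : BLtr Z) (t : List (BLtr Z)) : nfB lam (wd h t) = nfW lam h t := rfl

lemma nfB_cat (lam : k) (u v : BWord Z) : nfB lam (u.cat v) = mulA (nfB lam u) (nfB lam v) := by
  rw [bword_eq_wd u, bword_eq_wd v, wd_cat, nfB_wd, nfB_wd, nfB_wd, nfW_append]

lemma nfB_flr (lam : k) (w : BWord Z) : nfB lam w.flr = D lam (nfB lam w) := by
  rw [bword_eq_wd w, flr_wd, nfB_wd, nfB_wd, nfW_flr]

/-- the key local identity -/
lemma nfB_flr_cat (lam : k) (u v : BWord Z) :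
    nfB lam ((u.cat v).flr)
      = nfB lam ((u.flr).cat v) + nfB lam (u.cat v.flr)
        + lam • nfB lam ((u.flr).cat v.flr) := by
  rw [nfB_flr, nfB_cat, D_mul, nfB_cat, nfB_cat, nfB_cat, nfB_flr, nfB_flr]

/-- left context multiplier -/
noncomputable def cmbL (lam : k) : List (BLtr Z) → (BWord Z →₀ k) → (BWord Z →₀ k)
  | [], y => y
  | a :: t, y => mulA (nfW lam a t) y

/-- right context multiplier -/
noncomputable def cmbR (lam : k) : List (BLtr Z) → (BWord Z →₀ k) → (BWord Z →₀ k)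
  | [], y => y
  | a :: t, y => mulA y (nfW lam a t)

lemma cmbL_add (lam : k) (l : List (BLtr Z)) (y z : BWord Z →₀ k) :
    cmbL lam l (y + z) = cmbL lam l y + cmbL lam l z := by
  cases l with
  | nil => rfl
  | cons a t => simp only [cmbL, mulA_add_right]

lemma cmbL_smul (lam c : k) (l : List (BLtr Z)) (y : BWord Z →₀ k) :
    cmbL lam l (c • y) = c • cmbL lam l y := by
  cases l with
  | nil => rfl
  | cons a t => simp only [cmbL, mulA_smul_right]

lemma cmbR_add (lam : k) (l : List (BLtr Z)) (y z : BWord Z →₀ k) :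
    cmbR lam l (y + z) = cmbR lam l y + cmbR lam l z := by
  cases l with
  | nil => rfl
  | cons a t => simp only [cmbR, mulA_add_left]

lemma cmbR_smul (lam c : k) (l : List (BLtr Z)) (y : BWord Z →₀ k) :
    cmbR lam l (c • y) = c • cmbR lam l y := by
  cases l with
  | nil => rfl
  | cons a t => simp only [cmbR, mulA_smul_left]

/-- normal form associated to a context -/
noncomputable def ctxF (lam : k) : Ctx Z → (BWord Z →₀ k) → (BWord Z →₀ k)
  | .base l r, y => cmbL lam l (cmbR lam r y)
  | .deep l r q, y => cmbL lam l (cmbR lam r (D lam (ctxF lam q y)))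

lemma ctxF_add (lam : k) (q : Ctx Z) (y z : BWord Z →₀ k) :
    ctxF lam q (y + z) = ctxF lam q y + ctxF lam q z := by
  induction q generalizing y z with
  | base l r => simp only [ctxF, cmbR_add, cmbL_add]
  | deep l r q ih => simp only [ctxF, ih, D_add, cmbR_add, cmbL_add]

lemma ctxF_smul (lam c : k) (q : Ctx Z) (y : BWord Z →₀ k) :
    ctxF lam q (c • y) = c • ctxF lam q y := by
  induction q generalizing y with
  | base l r => simp only [ctxF, cmbR_smul, cmbL_smul]
  | deep l r q ih => simp only [ctxF, ih, D_smul, cmbR_smul, cmbL_smul]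

lemma nfB_base (lam : k) (l r : List (BLtr Z)) (x : BWord Z) :
    nfB lam ((Ctx.base l r).subst x) = cmbL lam l (cmbR lam r (nfB lam x)) := by
  obtain ⟨lx, hx⟩ := x
  cases lx with
  | nil => exact absurd rfl hx
  | cons hxh hxt =>
    rw [show (⟨hxh :: hxt, hx⟩ : BWord Z) = wd hxh hxt from bword_ext rfl]
    cases l with
    | nil =>
      cases r with
      | nil =>
        have : (Ctx.base ([]:List (BLtr Z)) []).subst (wd hxh hxt) = wd hxh hxt :=
          bword_ext (by simp [Ctx.subst, wd])
        rw [this]; simp only [cmbL, cmbR, nfB_wd]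
      | cons c r' =>
        have : (Ctx.base ([]:List (BLtr Z)) (c :: r')).subst (wd hxh hxt)
            = wd hxh (hxt ++ c :: r') := bword_ext (by simp [Ctx.subst, wd])
        rw [this]; simp only [cmbL, cmbR, nfB_wd, nfW_append]
    | cons a l' =>
      cases r with
      | nil =>
        have : (Ctx.base (a :: l') ([]:List (BLtr Z))).subst (wd hxh hxt)
            = wd a (l' ++ hxh :: hxt) := bword_ext (by simp [Ctx.subst, wd])
        rw [this]; simp only [cmbL, cmbR, nfB_wd, nfW_append]
      | cons c r' =>
        have : (Ctx.base (a :: l') (c :: r')).subst (wd hxh hxt)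
            = wd a (l' ++ hxh :: (hxt ++ c :: r')) := bword_ext (by simp [Ctx.subst, wd])
        rw [this]; simp only [cmbL, cmbR, nfB_wd, nfW_append, mulA_assoc]

lemma subst_deep_eq (l r : List (BLtr Z)) (q : Ctx Z) (x : BWord Z) :
    (Ctx.deep l r q).subst x = (Ctx.base l r).subst ((q.subst x).flr) :=
  bword_ext (by simp [Ctx.subst])

lemma nfB_subst (lam : k) (q : Ctx Z) (x : BWord Z) :
    nfB lam (q.subst x) = ctxF lam q (nfB lam x) := by
  induction q generalizing x with
  | base l r => rw [nfB_base]; rfl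
  | deep l r q ih =>
    rw [subst_deep_eq, nfB_base, nfB_flr, ih]
    rfl

/-- invariance of `nfB` under one rewrite anywhere -/
lemma nfB_subst_flr_cat (lam : k) (q : Ctx Z) (u v : BWord Z) :
    nfB lam (q.subst ((u.cat v).flr))
      = nfB lam (q.subst ((u.flr).cat v)) + nfB lam (q.subst (u.cat v.flr))
        + lam • nfB lam (q.subst ((u.flr).cat v.flr)) := by
  rw [nfB_subst, nfB_subst, nfB_subst, nfB_subst, nfB_flr_cat, ctxF_add, ctxF_add, ctxF_smul]

/-- the linear extension of full normalization -/
noncomputable def nfV (lam : k) (f : BWord Z →₀ k) : BWord Z →₀ k :=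
  f.sum fun w c => c • nfB lam w

lemma nfV_single (lam : k) (w : BWord Z) (c : k) :
    nfV lam (Finsupp.single w c) = c • nfB lam w := by
  rw [nfV]; exact Finsupp.sum_single_index (by simp)

@[simp] lemma nfV_zero (lam : k) : nfV lam (0 : BWord Z →₀ k) = 0 := Finsupp.sum_zero_index

lemma nfV_add (lam : k) (f g : BWord Z →₀ k) : nfV lam (f + g) = nfV lam f + nfV lam g := by
  rw [nfV, nfV, nfV]
  exact Finsupp.sum_add_index' (by simp) (by intro w c c'; rw [add_smul])

lemma nfV_smul (lam c : k) (f : BWord Z →₀ k) : nfV lam (c • f) = c • nfV lam f := by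
  rw [nfV, nfV, Finsupp.smul_sum, Finsupp.sum_smul_index (by simp)]
  exact Finsupp.sum_congr fun w _ => by rw [smul_smul]

lemma nfV_sub (lam : k) (f g : BWord Z →₀ k) : nfV lam (f - g) = nfV lam f - nfV lam g := by
  have : nfV lam (-g) = -(nfV lam g) := by
    rw [← neg_one_smul k g, nfV_smul, neg_one_smul]
  rw [sub_eq_add_neg, nfV_add, this, sub_eq_add_neg]

/-- `nfV` is invariant under one rewriting step -/
lemma nfV_step (lam : k) {f g : BWord Z →₀ k} (h : DiffStep lam f g) :
    nfV lam g = nfV lam f := by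
  obtain ⟨q, u, v, hne, rfl⟩ := h
  rw [nfV_add, nfV_sub, nfV_smul, nfV_add, nfV_add, nfV_smul, nfV_single, nfV_single,
    nfV_single, nfV_single, nfB_subst_flr_cat]
  simp only [one_smul, smul_add]
  abel

/-- normal letters -/
inductive NL : BLtr Z → Prop
  | of (z : Z) : NL (.of z)
  | flr {h : BLtr Z} : NL h → NL (.flr h [])

lemma nfW_nil_of_NL (lam : k) {a : BLtr Z} (h : NL a) :
    nfW lam a [] = Finsupp.single (wd a []) 1 := by
  induction h with
  | of z => rw [nfW_of]
  | flr hh ih =>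
    rw [nfW_flr, ih, D_single, one_smul, dW_wd, d, sA]

lemma nfW_of_normal (lam : k) : ∀ (t : List (BLtr Z)) (a : BLtr Z), NL a → (∀ b ∈ t, NL b) →
    nfW lam a t = Finsupp.single (wd a t) 1
  | [], a, ha, _ => nfW_nil_of_NL lam ha
  | b :: t, a, ha, ht => by
    rw [nfW_cons, nfW_nil_of_NL lam ha,
      nfW_of_normal lam t b (ht b (by simp)) (fun x hx => ht x (by simp [hx])),
      mulA_single_single, wd_cat, one_mul, List.nil_append]

lemma nfB_of_normal (lam : k) (w : BWord Z) (h : ∀ a ∈ w.1, NL a) :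
    nfB lam w = Finsupp.single w 1 := by
  rw [bword_eq_wd w, nfB_wd, nfW_of_normal lam _ _
    (h _ (List.head_mem w.2)) (fun b hb => h b (List.mem_of_mem_tail hb))]

lemma nfV_fixed (lam : k) {f : BWord Z →₀ k} (h : ∀ w ∈ f.support, ∀ a ∈ w.1, NL a) :
    nfV lam f = f := by
  rw [nfV]
  have : f.sum (fun w c => c • nfB lam w) = f.sum fun w c => Finsupp.single w c :=
    Finsupp.sum_congr fun w hw => by
      rw [nfB_of_normal lam w (h w hw), Finsupp.smul_single, smul_eq_mul, mul_one]
  rw [this, Finsupp.sum_single]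

/-- widening a context by outer lists -/
lemma ctx_widen (q : Ctx Z) (s t2 : List (BLtr Z)) (x : BWord Z) :
    ∃ q' : Ctx Z, (q'.subst x).1 = s ++ (q.subst x).1 ++ t2 := by
  cases q with
  | base l r =>
    exact ⟨.base (s ++ l) (r ++ t2), by simp [Ctx.subst, List.append_assoc]⟩
  | deep l r q0 =>
    exact ⟨.deep (s ++ l) (r ++ t2) q0, by simp [Ctx.subst, List.append_assoc]⟩

/-- a non-normal letter contains a redex -/
lemma letter_redex : ∀ (a : BLtr Z), ¬ NL a →
    ∃ (q : Ctx Z) (u v : BWord Z), (wd a [] : BWord Z) = q.subst ((u.cat v).flr)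
  | .of z, h => absurd (NL.of z) h
  | .flr h [], hn => by
    have hh : ¬ NL h := fun hh => hn (NL.flr hh)
    obtain ⟨q, u, v, e⟩ := letter_redex h hh
    refine ⟨.deep [] [] q, u, v, bword_ext ?_⟩
    show [BLtr.flr h []] = [] ++ (BWord.flr (q.subst ((u.cat v).flr))).1 ++ []
    rw [← e]
    simp [BWord.flr, wd]
  | .flr h (b :: t), _ => by
    refine ⟨.base [] [], wd h [], wd b t, bword_ext ?_⟩
    show [BLtr.flr h (b :: t)] = [] ++ (BWord.flr ((wd h []).cat (wd b t))).1 ++ []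
    rw [wd_cat]
    simp [BWord.flr, wd]

/-- a word containing a non-normal letter contains a redex -/
lemma word_redex (w : BWord Z) {a : BLtr Z} (ha : a ∈ w.1) (hna : ¬ NL a) :
    ∃ (q : Ctx Z) (u v : BWord Z), w = q.subst ((u.cat v).flr) := by
  obtain ⟨s, t2, hw⟩ := List.append_of_mem ha
  obtain ⟨q0, u, v, e⟩ := letter_redex a hna
  obtain ⟨q', hq'⟩ := ctx_widen q0 s t2 ((u.cat v).flr)
  refine ⟨q', u, v, bword_ext ?_⟩
  rw [hq', ← e]
  simpa [wd] using hw

mutual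
/-- measure of a letter -/
def mL : BLtr Z → ℕ
  | .of _ => 1
  | .flr h t => 3 ^ (mL h + mLs t)
/-- measure of a list of letters -/
def mLs : List (BLtr Z) → ℕ
  | [] => 0
  | a :: t => mL a + mLs t
end

lemma mL_pos (a : BLtr Z) : 1 ≤ mL a := by
  cases a with
  | of z => simp [mL]
  | flr h t => exact Nat.one_le_pow _ _ (by norm_num)

lemma mLs_append (l l' : List (BLtr Z)) : mLs (l ++ l') = mLs l + mLs l' := by
  induction l with
  | nil => simp [mLs]
  | cons a t ih => simp [mLs, ih]; omega

lemma mLs_pos (w : BWord Z) : 1 ≤ mLs w.1 := by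
  obtain ⟨l, hl⟩ := w
  cases l with
  | nil => exact absurd rfl hl
  | cons a t => have := mL_pos a; simp [mLs]; omega

lemma m_flr (w : BWord Z) : mLs (BWord.flr w).1 = 3 ^ mLs w.1 := by
  have h1 : mLs (BWord.flr w).1 = 3 ^ (mL (w.1.head w.2) + mLs w.1.tail) := by
    simp [BWord.flr, mLs, mL]
  have h2 : mLs w.1 = mL (w.1.head w.2) + mLs w.1.tail := by
    conv_lhs => rw [← List.cons_head_tail w.2]
    simp [mLs]
  rw [h1, ← h2]

lemma m_cat (u v : BWord Z) : mLs (u.cat v).1 = mLs u.1 + mLs v.1 := mLs_append u.1 v.1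

lemma m_subst_lt (q : Ctx Z) {x y : BWord Z} (h : mLs x.1 < mLs y.1) :
    mLs (q.subst x).1 < mLs (q.subst y).1 := by
  induction q with
  | base l r =>
    show mLs (l ++ x.1 ++ r) < mLs (l ++ y.1 ++ r)
    rw [mLs_append, mLs_append, mLs_append, mLs_append]
    omega
  | deep l r q ih =>
    show mLs (l ++ (BWord.flr (q.subst x)).1 ++ r) < mLs (l ++ (BWord.flr (q.subst y)).1 ++ r)
    rw [mLs_append, mLs_append, mLs_append, mLs_append, m_flr, m_flr]
    have := Nat.pow_lt_pow_right (a := 3) (by norm_num) ih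
    omega

lemma key_ineq {a b : ℕ} (ha : 1 ≤ a) (hb : 1 ≤ b) :
    3 ^ a + 3 ^ b < 3 ^ (a + b) ∧ 3 ^ a + b < 3 ^ (a + b) ∧ a + 3 ^ b < 3 ^ (a + b) := by
  have h3a : 3 ≤ 3 ^ a := by calc 3 = 3 ^ 1 := by norm_num
                                 _ ≤ 3 ^ a := Nat.pow_le_pow_right (by norm_num) ha
  have h3b : 3 ≤ 3 ^ b := by calc 3 = 3 ^ 1 := by norm_num
                                 _ ≤ 3 ^ b := Nat.pow_le_pow_right (by norm_num) hb
  have hlta : a < 3 ^ a := Nat.lt_pow_self (by norm_num : 1 < 3)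
  have hltb : b < 3 ^ b := Nat.lt_pow_self (by norm_num : 1 < 3)
  have hmul : 3 ^ (a + b) = 3 ^ a * 3 ^ b := pow_add 3 a b
  have hkey : 3 ^ a + 3 ^ b < 3 ^ a * 3 ^ b := by nlinarith
  refine ⟨by omega, by omega, by omega⟩

lemma m_redex_lt (q : Ctx Z) (u v : BWord Z) :
    mLs (q.subst ((u.flr).cat v)).1 < mLs (q.subst ((u.cat v).flr)).1 ∧
    mLs (q.subst (u.cat v.flr)).1 < mLs (q.subst ((u.cat v).flr)).1 ∧
    mLs (q.subst ((u.flr).cat v.flr)).1 < mLs (q.subst ((u.cat v).flr)).1 := by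
  obtain ⟨h3, h1, h2⟩ := key_ineq (mLs_pos u) (mLs_pos v)
  refine ⟨m_subst_lt q ?_, m_subst_lt q ?_, m_subst_lt q ?_⟩
  · rw [m_cat, m_flr, m_flr, m_cat]; exact h1
  · rw [m_cat, m_flr, m_flr, m_cat]; exact h2
  · rw [m_cat, m_flr, m_flr, m_flr, m_cat]; exact h3

/-- the termination measure -/
def Phi (f : BWord Z →₀ k) : ℕ := f.support.sum fun w => 4 ^ mLs w.1

lemma sum_insert_le' [DecidableEq (BWord Z)] {s : Finset (BWord Z)} {a : BWord Z}
    (ps : BWord Z → ℕ) : (insert a s).sum ps ≤ ps a + s.sum ps := by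
  by_cases h : a ∈ s
  · rw [Finset.insert_eq_self.mpr h]; omega
  · rw [Finset.sum_insert h]

lemma phi_step (lam : k) {f g : BWord Z →₀ k} (h : DiffStep lam f g) : Phi g < Phi f := by
  classical
  obtain ⟨q, u, v, hne, rfl⟩ := h
  obtain ⟨hm1, hm2, hm3⟩ := m_redex_lt q u v
  set t := q.subst ((u.cat v).flr) with ht
  set w1 := q.subst ((u.flr).cat v) with hw1
  set w2 := q.subst (u.cat v.flr) with hw2
  set w3 := q.subst ((u.flr).cat v.flr) with hw3
  set c := f t with hc
  set g := f - Finsupp.single t c + c • (Finsupp.single w1 (1:k) + Finsupp.single w2 (1:k)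
    + lam • Finsupp.single w3 (1:k)) with hg
  set M := mLs t.1 with hM
  have hMpos : 1 ≤ M := mLs_pos t
  set S : Finset (BWord Z) := insert w1 (insert w2 {w3}) with hS
  have hsub : g.support ⊆ (f.support.erase t) ∪ S := by
    intro x hx
    by_contra hx2
    simp only [Finset.mem_union, not_or] at hx2
    obtain ⟨hxe, hxS⟩ := hx2
    have hxS' : x ≠ w1 ∧ x ≠ w2 ∧ x ≠ w3 := by
      simp only [hS, Finset.mem_insert, Finset.mem_singleton, not_or] at hxS
      exact ⟨hxS.1, hxS.2.1, hxS.2.2⟩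
    have hgx : g x = 0 := by
      rw [hg]
      simp only [Finsupp.add_apply, Finsupp.sub_apply, Finsupp.smul_apply,
        Finsupp.single_apply, smul_eq_mul]
      rw [if_neg (Ne.symm hxS'.1), if_neg (Ne.symm hxS'.2.1), if_neg (Ne.symm hxS'.2.2)]
      by_cases hxt : x = t
      · subst hxt; simp [hc]
      · rw [if_neg (fun hh : t = x => hxt hh.symm)]
        have : x ∉ f.support := fun hmem => hxe (Finset.mem_erase.mpr ⟨hxt, hmem⟩)
        simp_all [Finsupp.notMem_support_iff.mp this]
    exact (Finsupp.mem_support_iff.mp hx) hgx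
  have ht_mem : t ∈ f.support := Finsupp.mem_support_iff.mpr hne
  have hps1 : 4 ^ mLs w1.1 ≤ 4 ^ (M - 1) := Nat.pow_le_pow_right (by norm_num) (by omega)
  have hps2 : 4 ^ mLs w2.1 ≤ 4 ^ (M - 1) := Nat.pow_le_pow_right (by norm_num) (by omega)
  have hps3 : 4 ^ mLs w3.1 ≤ 4 ^ (M - 1) := Nat.pow_le_pow_right (by norm_num) (by omega)
  have h4M : 4 ^ M = 4 * 4 ^ (M - 1) := by
    conv_lhs => rw [show M = (M - 1) + 1 by omega]
    rw [pow_succ]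
    ring
  have hPhig : Phi g ≤ ((f.support.erase t) ∪ S).sum fun w => 4 ^ mLs w.1 :=
    Finset.sum_le_sum_of_subset hsub
  have hunion : ((f.support.erase t) ∪ S).sum (fun w => 4 ^ mLs w.1)
      ≤ (f.support.erase t).sum (fun w => 4 ^ mLs w.1) + S.sum (fun w => 4 ^ mLs w.1) := by
    rw [← Finset.union_sdiff_self_eq_union, Finset.sum_union Finset.disjoint_sdiff]
    exact Nat.add_le_add_left (Finset.sum_le_sum_of_subset (Finset.sdiff_subset)) _
  have a1 : S.sum (fun w => 4 ^ mLs w.1)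
      ≤ 4 ^ mLs w1.1 + (insert w2 ({w3} : Finset (BWord Z))).sum (fun w => 4 ^ mLs w.1) :=
    sum_insert_le' _
  have a2 : (insert w2 ({w3} : Finset (BWord Z))).sum (fun w => 4 ^ mLs w.1)
      ≤ 4 ^ mLs w2.1 + ({w3} : Finset (BWord Z)).sum (fun w => 4 ^ mLs w.1) :=
    sum_insert_le' _
  have a3 : ({w3} : Finset (BWord Z)).sum (fun w => (4:ℕ) ^ mLs w.1) = (4:ℕ) ^ mLs w3.1 :=
    Finset.sum_singleton (fun w : BWord Z => (4:ℕ) ^ mLs w.1) w3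
  have herase : 4 ^ M + (f.support.erase t).sum (fun w => 4 ^ mLs w.1) = Phi f := by
    rw [Phi]
    exact Finset.add_sum_erase f.support (fun w => (4:ℕ) ^ mLs w.1) ht_mem
  have hpow1 : 1 ≤ (4:ℕ) ^ (M - 1) := Nat.one_le_pow _ _ (by norm_num)
  omega

lemma nfV_chain (lam : k) {f g : BWord Z →₀ k}
    (h : Relation.ReflTransGen (DiffStep lam) f g) : nfV lam g = nfV lam f := by
  induction h with
  | refl => rfl
  | tail _ hstep ih => rw [nfV_step lam hstep, ih]

lemma to_nf (lam : k) : ∀ (n : ℕ) (f : BWord Z →₀ k), Phi f < n →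
    Relation.ReflTransGen (DiffStep lam) f (nfV lam f) := by
  intro n
  induction n with
  | zero => intro f hf; omega
  | succ n ih =>
    intro f hf
    by_cases hnorm : ∀ w ∈ f.support, ∀ a ∈ w.1, NL a
    · rw [nfV_fixed lam hnorm]
    · push_neg at hnorm
      obtain ⟨w, hw, a, ha, hna⟩ := hnorm
      obtain ⟨q, u, v, e⟩ := word_redex w ha hna
      have hne : f (q.subst ((u.cat v).flr)) ≠ 0 := by
        rw [← e]; exact Finsupp.mem_support_iff.mp hw
      set g := f - Finsupp.single (q.subst (BWord.flr (u.cat v)))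
              (f (q.subst (BWord.flr (u.cat v))))
          + f (q.subst (BWord.flr (u.cat v))) •
            (Finsupp.single (q.subst ((u.flr).cat v)) (1 : k)
              + Finsupp.single (q.subst (u.cat v.flr)) (1 : k)
              + lam • Finsupp.single (q.subst ((u.flr).cat v.flr)) (1 : k)) with hg
      have hstep : DiffStep lam f g := ⟨q, u, v, hne, hg⟩
      have hlt : Phi g < Phi f := phi_step lam hstep
      have hrest := ih g (by omega)
      rw [nfV_step lam hstep] at hrest
      exact Relation.ReflTransGen.head hstep hrest

end DiffRw

/-- The rewriting system of the differential operator identity of weight `λ` is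
convergent: terminating and confluent. -/
theorem differential_rewriting_convergent {Z k : Type*} [Field k] (lam : k) :
    RelTerminating (DiffStep (Z := Z) (k := k) lam) ∧
      RelConfluent (DiffStep (Z := Z) (k := k) lam) := by
  constructor
  · rintro ⟨f, hf⟩
    have key : ∀ n, DiffRw.Phi (f n) + n ≤ DiffRw.Phi (f 0) := by
      intro n
      induction n with
      | zero => omega
      | succ n ihn =>
        have := DiffRw.phi_step lam (hf n)
        omega
    have := key (DiffRw.Phi (f 0) + 1)
    omega
  · intro f g₁ g₂ h1 h2
    refine ⟨DiffRw.nfV lam f, ?_, ?_⟩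
    · have := DiffRw.to_nf lam (DiffRw.Phi g₁ + 1) g₁ (by omega)
      rwa [DiffRw.nfV_chain lam h1] at this
    · have := DiffRw.to_nf lam (DiffRw.Phi g₂ + 1) g₂ (by omega)
      rwa [DiffRw.nfV_chain lam h2] at this
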